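/- Weak duality v(P) ≥ v(D^F) holds if and only if Ω ∩ B ⊆ epi (f − g + δ_A)^c ∩ B, where B = {(0,0)} × ℝ_{++} × ℝ ⊆ W × ℝ. -/

import Mathlib

noncomputable section
open Classical

/-- The space `W = X* × X* × ℝ` of the c-conjugation scheme. -/
abbrev W (X : Type*) [AddCommGroup X] [Module ℝ X] [TopologicalSpace X] : Type _ :=
  (X →L[ℝ] ℝ) × (X →L[ℝ] ℝ) × ℝ

variable {X : Type*} [AddCommGroup X] [Module ℝ X] [TopologicalSpace X]

/-- The coupling function `c(x,(x*,y*,α)) = ⟨x,x*⟩` if `⟨x,y*⟩ < α`, `+∞` otherwise. -/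
def cpl (x : X) (w : W X) : EReal :=
  if w.2.1 x < w.2.2 then ((w.1 x : ℝ) : EReal) else ⊤

/-- The c-conjugate `f^c(w) = sup_x { c(x,w) − f(x) }`. -/
def cConj (f : X → EReal) (w : W X) : EReal := ⨆ x : X, cpl x w - f x

/-- The c'-conjugate `h^{c'}(x) = sup_w { c'(w,x) − h(w) }`. -/
def cpConj (h : W X → EReal) (x : X) : EReal := ⨆ w : W X, cpl x w - h w

/-- Subtraction with the DC convention `(+∞) − (+∞) = +∞`. -/
def dcSub (a b : EReal) : EReal := if a = ⊤ then ⊤ else a - b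

/-- Indicator function `δ_A`. -/
def indic (A : Set X) (x : X) : EReal := if x ∈ A then (0 : EReal) else ⊤

/-- Epigraph of a function on `W`. -/
def epiW (h : W X → EReal) : Set (W X × ℝ) := {p | h p.1 ≤ (p.2 : EReal)}

/-- Effective domain. -/
def domE {α : Type*} (f : α → EReal) : Set α := {x | f x ≠ ⊤}

/-- The inner expression of the Fenchel-type dual problems. -/
def dualExpr (f g : X → EReal) (A : Set X) (z w : W X) : EReal :=
  cConj g w - cConj f (w.1 - z.1, -z.2.1, z.2.2) - cConj (indic A) z

/-- The set `Z = X* × X* × ℝ_{++}`. -/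
def Zset (X : Type*) [AddCommGroup X] [Module ℝ X] [TopologicalSpace X] : Set (W X) :=
  {z | 0 < z.2.2}

/-- Primal optimal value `v(P) = inf_X { f − g + δ_A }`. -/
def vP (f g : X → EReal) (A : Set X) : EReal := ⨅ x : X, dcSub (f x) (g x) + indic A x

/-- Dual optimal value `v(D^F)`. -/
def vDF (f g : X → EReal) (A : Set X) : EReal :=
  ⨆ z ∈ Zset X, ⨅ w ∈ domE (cConj g), dualExpr f g A z w

/-- Dual optimal value `v(D̄^F)`. -/
def vDbarF (f g : X → EReal) (A : Set X) : EReal :=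
  ⨅ w ∈ domE (cConj g), ⨆ z ∈ Zset X, dualExpr f g A z w

/-- The set `Ω`. -/
def OmegaSet (f g : X → EReal) (A : Set X) : Set (W X × ℝ) :=
  ⋃ z ∈ domE (cConj (indic A)), ⋂ w ∈ domE (cConj g),
    (fun p : W X × ℝ =>
        p - ((w.1, 0, 0), (cConj g w).toReal - (cConj (indic A) z).toReal)) ''
      epiW (cConj (fun x => dcSub (f x) (cpl x (-z.1, -z.2.1, z.2.2))))

/-- The set `K`. -/
def Kset (f g : X → EReal) (A : Set X) : Set (W X × ℝ) :=
  ⋂ w ∈ domE (cConj g), ⋃ z ∈ domE (cConj (indic A)),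
    (fun p : W X × ℝ =>
        p - ((w.1, 0, 0), (cConj g w).toReal - (cConj (indic A) z).toReal)) ''
      epiW (cConj (fun x => dcSub (f x) (cpl x (-z.1, -z.2.1, z.2.2))))

/-- The set `B = {(0,0)} × ℝ_{++} × ℝ`. -/
def Bset (X : Type*) [AddCommGroup X] [Module ℝ X] [TopologicalSpace X] :
    Set (W X × ℝ) :=
  {p | p.1.1 = 0 ∧ p.1.2.1 = 0 ∧ 0 < p.1.2.2}

/-- Properness of an extended-real-valued function. -/
def ProperFn {α : Type*} (f : α → EReal) : Prop := (∀ x, f x ≠ ⊥) ∧ ∃ x, f x ≠ ⊤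

/-- Convexity of an extended-real-valued function via its epigraph. -/
def ConvexFn (f : X → EReal) : Prop := Convex ℝ {p : X × ℝ | f p.1 ≤ (p.2 : EReal)}

/-- Evenly convex set. -/
def EvenlyConvexSet {Y : Type*} [AddCommGroup Y] [Module ℝ Y] [TopologicalSpace Y]
    (C : Set Y) : Prop :=
  ∀ y0 ∉ C, ∃ φ : Y →L[ℝ] ℝ, ∀ y ∈ C, φ (y - y0) < 0

/-- Evenly convex function: its epigraph is an evenly convex subset of `X × ℝ`. -/
def EConvexFn (f : X → EReal) : Prop :=
  EvenlyConvexSet {p : X × ℝ | f p.1 ≤ (p.2 : EReal)}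


-- auxiliary lemmas
lemma coe_le_cpl (x : X) (w : W X) : ((w.1 x : ℝ) : EReal) ≤ cpl x w := by
  unfold cpl; split_ifs <;> simp

lemma cpl_ne_bot (x : X) (w : W X) : cpl x w ≠ ⊥ := by
  unfold cpl; split_ifs
  · exact EReal.coe_ne_bot _
  · exact top_ne_bot

lemma cpl_anti (x : X) {w w' : W X} (h1 : w'.1 = w.1) (h2 : w'.2.1 = w.2.1)
    (h3 : w.2.2 ≤ w'.2.2) : cpl x w' ≤ cpl x w := by
  unfold cpl
  rw [h1, h2]
  split_ifs with ha hb hc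
  · exact le_rfl
  · exact le_top
  · exact absurd (hc.trans_le h3) ha
  · exact le_rfl

lemma cConj_anti (h : X → EReal) {w w' : W X} (h1 : w'.1 = w.1) (h2 : w'.2.1 = w.2.1)
    (h3 : w.2.2 ≤ w'.2.2) : cConj h w' ≤ cConj h w :=
  iSup_mono fun x => EReal.sub_le_sub (cpl_anti x h1 h2 h3) le_rfl

lemma ereal_isup_neg {ι : Sort*} (h : ι → EReal) : (⨆ i, -(h i)) = -⨅ i, h i := by
  refine le_antisymm (iSup_le fun i => EReal.neg_le_neg_iff.2 (iInf_le _ i)) ?_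
  rw [EReal.neg_le]
  exact le_iInf fun i => EReal.neg_le.1 (le_iSup (fun i => -(h i)) i)

lemma cpl_B {w : W X} (h1 : w.1 = 0) (h2 : w.2.1 = 0) (h3 : 0 < w.2.2) (x : X) :
    cpl x w = 0 := by
  unfold cpl; rw [h1, h2]; simp [h3]

lemma cConj_B (h : X → EReal) {w : W X} (h1 : w.1 = 0) (h2 : w.2.1 = 0) (h3 : 0 < w.2.2) :
    cConj h w = -⨅ x, h x := by
  unfold cConj
  rw [← ereal_isup_neg]
  refine iSup_congr fun x => ?_
  rw [cpl_B h1 h2 h3 x, sub_eq_add_neg, zero_add]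

lemma cConj_ne_bot {h : X → EReal} {x0 : X} (ht : h x0 ≠ ⊤) (hb : h x0 ≠ ⊥) (w : W X) :
    cConj h w ≠ ⊥ := by
  unfold cConj
  intro hc
  have h1 : ((w.1 x0 : ℝ) : EReal) - h x0 ≤ ⨆ x, cpl x w - h x :=
    le_trans (EReal.sub_le_sub (coe_le_cpl x0 w) le_rfl) (le_iSup (fun x => cpl x w - h x) x0)
  rw [hc, le_bot_iff, ← EReal.coe_toReal ht hb, ← EReal.coe_sub] at h1
  exact EReal.coe_ne_bot _ h1

lemma conj_shift {f : X → EReal} (hf : ∀ x, f x ≠ ⊥) (z : W X) {q : W X}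
    (h2 : q.2.1 = 0) (hα : 0 < q.2.2) :
    cConj (fun x => dcSub (f x) (cpl x (-z.1, -z.2.1, z.2.2))) q
      = cConj f (q.1 - z.1, -z.2.1, z.2.2) := by
  unfold cConj
  refine iSup_congr fun x => ?_
  have hc : cpl x q = ((q.1 x : ℝ) : EReal) := by
    unfold cpl; rw [h2]; simp [hα]
  rw [hc]
  unfold cpl dcSub
  simp only [ContinuousLinearMap.neg_apply, ContinuousLinearMap.sub_apply]
  by_cases hT : f x = ⊤
  · rw [if_pos hT, hT, EReal.sub_top, EReal.sub_top]
  · have hfx : f x = ((f x).toReal : EReal) := (EReal.coe_toReal hT (hf x)).symm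
    rw [if_neg hT, hfx]
    by_cases hcond : -(z.2.1 x) < z.2.2
    · rw [if_pos hcond, if_pos hcond]
      norm_cast
      ring
    · rw [if_neg hcond, if_neg hcond, EReal.sub_top,
        EReal.sub_bot (EReal.coe_ne_bot _), EReal.top_sub_coe]

lemma ineq_equiv {F : EReal} (hF : F ≠ ⊥) (c d r : ℝ) :
    F ≤ ((r + (c - d) : ℝ) : EReal) ↔ ((-r : ℝ) : EReal) ≤ (c : EReal) - F - (d : EReal) := by
  by_cases hT : F = ⊤
  · subst hT
    rw [EReal.sub_top, EReal.bot_sub]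
    simp only [top_le_iff, le_bot_iff]
    constructor
    · exact fun h => absurd h (EReal.coe_ne_top _)
    · exact fun h => absurd h (EReal.coe_ne_bot _)
  · have hFx : F = (F.toReal : EReal) := (EReal.coe_toReal hT hF).symm
    rw [hFx, ← EReal.coe_sub, ← EReal.coe_sub, EReal.coe_le_coe_iff, EReal.coe_le_coe_iff]
    constructor <;> intro <;> linarith

def Ifun (f g : X → EReal) (A : Set X) (z : W X) : EReal :=
  ⨅ w ∈ domE (cConj g), dualExpr f g A z w

lemma Ifun_mono (f g : X → EReal) (A : Set X) (z : W X) :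
    Ifun f g A z ≤ Ifun f g A (z.1, z.2.1, max z.2.2 1) := by
  refine iInf₂_mono fun w hw => ?_
  unfold dualExpr
  dsimp only
  exact EReal.sub_le_sub
    (EReal.sub_le_sub le_rfl (cConj_anti f rfl rfl (le_max_left _ _)))
    (cConj_anti _ rfl rfl (le_max_left _ _))

/-- Proposition 4.1(i): weak duality `v(P) ≥ v(D^F)` holds iff
`Ω ∩ B ⊆ epi (f−g+δ_A)^c ∩ B`. -/
theorem prop41_i
    {X : Type*} [AddCommGroup X] [Module ℝ X] [TopologicalSpace X]
    (f g : X → EReal) (A : Set X) (hA : A.Nonempty)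
    (hf : ProperFn f) (hfc : ConvexFn f) (hg : ProperFn g) (hgc : ConvexFn g)
    (hdom : domE f ⊆ domE g) :
    vDF f g A ≤ vP f g A ↔
      OmegaSet f g A ∩ Bset X ⊆
        epiW (cConj (fun x => dcSub (f x) (g x) + indic A x)) ∩ Bset X := by
  obtain ⟨xf, hxf⟩ := hf.2
  obtain ⟨xg, hxg⟩ := hg.2
  obtain ⟨xa, hxa⟩ := hA
  have hIndT : indic A xa ≠ ⊤ := by simp [indic, hxa]
  have hIndB : indic A xa ≠ ⊥ := by simp [indic, hxa]
  have hFne : ∀ w' : W X, cConj f w' ≠ ⊥ := fun w' => cConj_ne_bot hxf (hf.1 xf) w'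
  have hGfin : ∀ w ∈ domE (cConj g), cConj g w = ((cConj g w).toReal : EReal) :=
    fun w hw => (EReal.coe_toReal hw (cConj_ne_bot hxg (hg.1 xg) w)).symm
  have hDfin : ∀ z ∈ domE (cConj (indic A)),
      cConj (indic A) z = ((cConj (indic A) z).toReal : EReal) :=
    fun z hz => (EReal.coe_toReal hz (cConj_ne_bot hIndT hIndB z)).symm
  -- the primal objective is never ⊥
  have hh : ∀ x, dcSub (f x) (g x) + indic A x ≠ ⊥ := by
    intro x hc
    rcases EReal.add_eq_bot_iff.1 hc with h1 | h1
    · unfold dcSub at h1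
      split_ifs at h1 with hT
      · simp at h1
      have hgx : g x ≠ ⊤ := hdom (show x ∈ domE f from hT)
      rw [← EReal.coe_toReal hT (hf.1 x), ← EReal.coe_toReal hgx (hg.1 x),
        ← EReal.coe_sub] at h1
      exact EReal.coe_ne_bot _ h1
    · unfold indic at h1
      split_ifs at h1 <;> simp at h1
  -- characterization of B-points of the epigraph
  have hepi : ∀ p : W X × ℝ, p ∈ Bset X →
      (p ∈ epiW (cConj (fun x => dcSub (f x) (g x) + indic A x)) ↔
        -vP f g A ≤ (p.2 : EReal)) := by
    intro p hp
    obtain ⟨h1, h2, h3⟩ := hp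
    unfold epiW
    rw [Set.mem_setOf_eq, cConj_B _ h1 h2 h3]
    exact Iff.rfl
  -- characterization of B-points of Ω
  have homega : ∀ p : W X × ℝ, p ∈ Bset X →
      (p ∈ OmegaSet f g A ↔ ∃ z ∈ domE (cConj (indic A)),
        ((-p.2 : ℝ) : EReal) ≤ Ifun f g A z) := by
    intro p hp
    obtain ⟨h1, h2, h3⟩ := hp
    unfold OmegaSet
    simp only [Set.mem_iUnion, Set.mem_iInter, exists_prop]
    refine exists_congr fun z => and_congr_right fun hz => ?_
    have : Ifun f g A z = ⨅ w ∈ domE (cConj g), dualExpr f g A z w := rfl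
    rw [this, le_iInf₂_iff]
    refine forall_congr' fun w => forall_congr' fun hw => ?_
    set s : W X × ℝ :=
      ((w.1, 0, 0), (cConj g w).toReal - (cConj (indic A) z).toReal) with hs
    have himg : p ∈ (fun q : W X × ℝ => q - s) ''
        epiW (cConj (fun x => dcSub (f x) (cpl x (-z.1, -z.2.1, z.2.2)))) ↔
        (p + s) ∈ epiW (cConj (fun x => dcSub (f x) (cpl x (-z.1, -z.2.1, z.2.2)))) := by
      constructor
      · rintro ⟨q, hq, rfl⟩
        rwa [sub_add_cancel]
      · intro hmem
        exact ⟨p + s, hmem, add_sub_cancel_right _ _⟩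
    rw [himg]
    unfold epiW
    rw [Set.mem_setOf_eq]
    have h2' : (p + s).1.2.1 = 0 := by simp [hs, h2]
    have hα' : 0 < (p + s).1.2.2 := by simpa [hs] using h3
    rw [conj_shift hf.1 z h2' hα']
    have hq1 : (p + s).1.1 = w.1 := by simp [hs, h1]
    have hq2 : (p + s).2 = p.2 + ((cConj g w).toReal - (cConj (indic A) z).toReal) := rfl
    rw [hq1, hq2]
    have := ineq_equiv (hFne (w.1 - z.1, -z.2.1, z.2.2))
      ((cConj g w).toReal) ((cConj (indic A) z).toReal) p.2
    rw [← hGfin w hw, ← hDfin z hz] at this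
    rw [this]
    unfold dualExpr
    exact Iff.rfl
  -- characterization of vDF ≤ vP
  have hvdf : vDF f g A ≤ vP f g A ↔ ∀ z : W X, 0 < z.2.2 → Ifun f g A z ≤ vP f g A := by
    have hd : vDF f g A = ⨆ z ∈ Zset X, Ifun f g A z := rfl
    rw [hd, iSup₂_le_iff]
    exact Iff.rfl
  -- z₀ = (0,0,1) belongs to dom δ_A^c
  have hz0 : ((0, 0, (1 : ℝ)) : W X) ∈ domE (cConj (indic A)) := by
    have hle : cConj (indic A) ((0, 0, (1 : ℝ)) : W X) ≤ 0 := by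
      refine iSup_le fun x => ?_
      rw [cpl_B rfl rfl one_pos]
      unfold indic
      split_ifs
      · rw [sub_eq_add_neg, neg_zero, add_zero]
      · rw [EReal.sub_top]
        exact bot_le
    intro hT
    rw [hT] at hle
    exact absurd hle (by simp)
  rw [hvdf]
  constructor
  · intro hL
    rintro p ⟨hpO, hpB⟩
    refine ⟨?_, hpB⟩
    rw [hepi p hpB]
    obtain ⟨z, hz, hle⟩ := (homega p hpB).1 hpO
    have hz' : Ifun f g A (z.1, z.2.1, max z.2.2 1) ≤ vP f g A :=
      hL _ (lt_of_lt_of_le one_pos (le_max_right _ _))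
    have hfin : ((-p.2 : ℝ) : EReal) ≤ vP f g A :=
      le_trans hle (le_trans (Ifun_mono f g A z) hz')
    rw [EReal.coe_neg] at hfin
    exact EReal.neg_le.1 hfin
  · intro hR
    have hR' : ∀ z ∈ domE (cConj (indic A)), ∀ r : ℝ,
        ((-r : ℝ) : EReal) ≤ Ifun f g A z → -vP f g A ≤ (r : EReal) := by
      intro z hz r hle
      have hpB : ((((0 : X →L[ℝ] ℝ), (0 : X →L[ℝ] ℝ), (1 : ℝ)) : W X), r) ∈ Bset X :=
        ⟨rfl, rfl, one_pos⟩
      have hpO : ((((0 : X →L[ℝ] ℝ), (0 : X →L[ℝ] ℝ), (1 : ℝ)) : W X), r) ∈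
          OmegaSet f g A := (homega _ hpB).2 ⟨z, hz, hle⟩
      exact (hepi _ hpB).1 (hR ⟨hpO, hpB⟩).1
    intro z hz22
    by_cases hP : vP f g A = ⊤
    · rw [hP]; exact le_top
    by_cases hzdom : z ∈ domE (cConj (indic A))
    · by_contra hlt
      obtain ⟨s, hs1, hs2⟩ := EReal.exists_between_coe_real (not_le.1 hlt)
      have hns := hR' z hzdom (-s) (by rw [neg_neg]; exact hs2.le)
      rw [EReal.coe_neg] at hns
      exact absurd hs1 (not_lt.2 (EReal.neg_le_neg_iff.1 hns))
    · have hztop : cConj (indic A) z = ⊤ := not_not.1 hzdom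
      rcases (domE (cConj g)).eq_empty_or_nonempty with hE | ⟨w0, hw0⟩
      · exfalso
        apply hP
        have hall : ∀ r : ℝ, -vP f g A ≤ (r : EReal) := by
          intro r
          apply hR' _ hz0 r
          have hI : Ifun f g A ((0, 0, (1 : ℝ)) : W X) = ⊤ := by
            simp [Ifun, hE]
          rw [hI]
          exact le_top
        have hbot : -vP f g A = ⊥ := by
          by_contra hbb
          obtain ⟨r, hr1, hr2⟩ :=
            EReal.exists_between_coe_real (bot_lt_iff_ne_bot.2 hbb)
          exact absurd (hall r) (not_le.2 hr2)
        rw [← neg_neg (vP f g A), hbot, EReal.neg_bot]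
      · have hIb : Ifun f g A z ≤ ⊥ := by
          refine le_trans (iInf₂_le w0 hw0) ?_
          unfold dualExpr
          rw [hztop, EReal.sub_top]
        exact le_trans hIb bot_le

end
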